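/- For every n ≥ 3, there exists an NFA over the binary alphabet {0,1} with n states, all of which are final, such that the minimal DFA accepting the same language has exactly 2^n states. Specifically, the NFA M with states {0,...,n-1}, initial state 0, all states final, where δ(i,0) = {i+1} for 0 ≤ i ≤ n-3, δ(n-1,0) = {n-1}, and δ(i,1) = {0, i+1} for 0 ≤ i ≤ n-2 (and δ undefined/empty otherwise), has the property that in the subset construction every subset S ⊆ {0,...,n-1} is reachable from {0}, and distinct subsets are pairwise inequivalent. -/

import Mathlib

/-- The NFA of Theorem `allfinal`: states `{0,…,n-1}`, initial state `0`, all states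
final, with `δ(i,0) = {i+1}` for `0 ≤ i ≤ n-3`, `δ(n-1,0) = {n-1}`, and
`δ(i,1) = {0, i+1}` for `0 ≤ i ≤ n-2` (empty otherwise). -/
def allFinalNFA (n : ℕ) : NFA (Fin 2) (Fin n) where
  step i a :=
    if a = 0 then
      if i.val + 3 ≤ n then {j | j.val = i.val + 1}
      else if i.val = n - 1 then {i}
      else ∅
    else
      if i.val + 2 ≤ n then {j | j.val = 0 ∨ j.val = i.val + 1}
      else ∅
  start := {j | j.val = 0}
  accept := Set.univ

namespace AllFinal
open scoped Classical

def sng (n a : ℕ) : Set (Fin n) := {x | x.val = a}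

lemma mem_sng {n a : ℕ} (x : Fin n) : x ∈ sng n a ↔ x.val = a := Iff.rfl

lemma sng_nonempty {n a : ℕ} (h : a < n) : (sng n a).Nonempty := ⟨⟨a, h⟩, rfl⟩

variable {α σ : Type*} {n : ℕ}

lemma step_zero_eq (i : Fin n) :
    (allFinalNFA n).step i 0 =
      if i.val + 3 ≤ n then {j | j.val = i.val + 1}
      else if i.val = n - 1 then {i} else ∅ := rfl

lemma step_one_eq (i : Fin n) :
    (allFinalNFA n).step i 1 =
      if i.val + 2 ≤ n then {j | j.val = 0 ∨ j.val = i.val + 1} else ∅ := rfl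

lemma evalFrom_app (M : NFA α σ) (S : Set σ) (x y : List α) :
    M.evalFrom S (x ++ y) = M.evalFrom (M.evalFrom S x) y := by
  simp [NFA.evalFrom, List.foldl_append]

lemma evalFrom_cons (M : NFA α σ) (S : Set σ) (a : α) (w : List α) :
    M.evalFrom S (a :: w) = M.evalFrom (M.stepSet S a) w := rfl

lemma evalFrom_empty (M : NFA α σ) (w : List α) : M.evalFrom ∅ w = ∅ := by
  induction w with
  | nil => rfl
  | cons a w ih => rw [evalFrom_cons, M.stepSet_empty]; exact ih

lemma stepSet_iUnion {ι : Sort*} (M : NFA α σ) (S : ι → Set σ) (a : α) :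
    M.stepSet (⋃ i, S i) a = ⋃ i, M.stepSet (S i) a := by
  ext x
  simp only [NFA.mem_stepSet, Set.mem_iUnion]
  tauto

lemma evalFrom_iUnion {ι : Sort*} (M : NFA α σ) (S : ι → Set σ) (w : List α) :
    M.evalFrom (⋃ i, S i) w = ⋃ i, M.evalFrom (S i) w := by
  induction w generalizing S with
  | nil => simp [NFA.evalFrom_nil]
  | cons a w ih =>
    rw [evalFrom_cons, stepSet_iUnion, ih]
    rfl

lemma evalFrom_union (M : NFA α σ) (S T : Set σ) (w : List α) :
    M.evalFrom (S ∪ T) w = M.evalFrom S w ∪ M.evalFrom T w := by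
  rw [Set.union_eq_iUnion, evalFrom_iUnion]
  ext x
  simp only [Set.mem_iUnion, Set.mem_union]
  constructor
  · rintro ⟨b, hb⟩
    cases b
    · exact Or.inr hb
    · exact Or.inl hb
  · rintro (h | h)
    · exact ⟨true, h⟩
    · exact ⟨false, h⟩

lemma evalFrom_eq_biUnion (M : NFA α σ) (S : Set σ) (w : List α) :
    M.evalFrom S w = ⋃ j ∈ S, M.evalFrom {j} w := by
  conv_lhs => rw [← Set.biUnion_of_singleton S]
  rw [show (⋃ x ∈ S, ({x} : Set σ)) = ⋃ x, ⋃ _ : x ∈ S, ({x} : Set σ) from rfl,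
    evalFrom_iUnion]
  exact Set.iUnion_congr fun j => evalFrom_iUnion M _ w

lemma step0_sng (hn : 3 ≤ n) (a : ℕ) :
    (allFinalNFA n).stepSet (sng n a) 0 =
      if a = n - 1 then sng n (n - 1) else if a + 3 ≤ n then sng n (a + 1) else ∅ := by
  ext x
  simp only [NFA.mem_stepSet, mem_sng, step_zero_eq]
  by_cases h1 : a = n - 1
  · rw [if_pos h1]
    rw [mem_sng]
    constructor
    · rintro ⟨t, ht, hx⟩
      rw [if_neg (by omega), if_pos (by omega)] at hx
      rw [Set.mem_singleton_iff] at hx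
      rw [hx]; omega
    · intro hx
      refine ⟨x, by omega, ?_⟩
      rw [if_neg (by omega), if_pos (by omega)]
      exact rfl
  · rw [if_neg h1]
    by_cases h2 : a + 3 ≤ n
    · rw [if_pos h2]
      rw [mem_sng]
      constructor
      · rintro ⟨t, ht, hx⟩
        rw [if_pos (by omega)] at hx
        simp only [Set.mem_setOf_eq] at hx
        omega
      · intro hx
        refine ⟨⟨a, by omega⟩, rfl, ?_⟩
        rw [if_pos (show (⟨a, by omega⟩ : Fin n).val + 3 ≤ n from h2)]
        exact hx
    · rw [if_neg h2]
      constructor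
      · rintro ⟨t, ht, hx⟩
        rw [if_neg (by omega), if_neg (by omega)] at hx
        exact absurd hx (Set.notMem_empty x)
      · exact fun hx => absurd hx (Set.notMem_empty x)

lemma step1_sng (hn : 3 ≤ n) (a : ℕ) :
    (allFinalNFA n).stepSet (sng n a) 1 =
      if a + 2 ≤ n then sng n 0 ∪ sng n (a + 1) else ∅ := by
  ext x
  simp only [NFA.mem_stepSet, mem_sng, step_one_eq]
  by_cases h1 : a + 2 ≤ n
  · rw [if_pos h1]
    simp only [Set.mem_union, mem_sng]
    constructor
    · rintro ⟨t, ht, hx⟩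
      rw [if_pos (by omega)] at hx
      simp only [Set.mem_setOf_eq] at hx
      rcases hx with h | h
      · exact Or.inl h
      · exact Or.inr (by omega)
    · intro hx
      refine ⟨⟨a, by omega⟩, rfl, ?_⟩
      rw [if_pos (show (⟨a, by omega⟩ : Fin n).val + 2 ≤ n from h1)]
      exact hx
  · rw [if_neg h1]
    constructor
    · rintro ⟨t, ht, hx⟩
      rw [if_neg (by omega)] at hx
      exact absurd hx (Set.notMem_empty x)
    · exact fun hx => absurd hx (Set.notMem_empty x)


lemma zrun (hn : 3 ≤ n) (a k : ℕ) (ha : a < n) :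
    (allFinalNFA n).evalFrom (sng n a) (List.replicate k 0) =
      if a = n - 1 then sng n (n - 1)
      else if a + k + 2 ≤ n then sng n (a + k) else ∅ := by
  induction k generalizing a with
  | zero =>
    rw [List.replicate_zero, NFA.evalFrom_nil]
    by_cases h1 : a = n - 1
    · rw [if_pos h1, h1]
    · rw [if_neg h1, if_pos (by omega), Nat.add_zero]
  | succ k ih =>
    rw [List.replicate_succ, evalFrom_cons, step0_sng hn a]
    by_cases h1 : a = n - 1
    · rw [if_pos h1, if_pos h1, ih (n - 1) (by omega), if_pos rfl]
    · rw [if_neg h1, if_neg h1]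
      by_cases h2 : a + 3 ≤ n
      · rw [if_pos h2, ih (a + 1) (by omega), if_neg (by omega)]
        by_cases h3 : a + (k + 1) + 2 ≤ n
        · rw [if_pos (by omega), if_pos h3, show a + 1 + k = a + (k + 1) by omega]
        · rw [if_neg (by omega), if_neg h3]
      · rw [if_neg h2, evalFrom_empty, if_neg (by omega)]

/-- the isolating word for state `i` -/
def wIso (n i : ℕ) : List (Fin 2) :=
  if i = n - 1 then List.replicate (n - 1) 0
  else List.replicate (n - 2 - i) 0 ++ [1] ++ List.replicate (n - 1) 0

lemma iso (hn : 3 ≤ n) (i j : ℕ) (hi : i < n) (hj : j < n) :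
    (allFinalNFA n).evalFrom (sng n j) (wIso n i) =
      if j = i then sng n (n - 1) else ∅ := by
  unfold wIso
  by_cases hi1 : i = n - 1
  · rw [if_pos hi1, zrun hn j (n - 1) hj]
    by_cases hj1 : j = n - 1
    · rw [if_pos hj1, if_pos (by omega)]
    · rw [if_neg hj1, if_neg (by omega), if_neg (by omega)]
  · rw [if_neg hi1, evalFrom_app, evalFrom_app, zrun hn j (n - 2 - i) hj]
    by_cases hj1 : j = n - 1
    · rw [if_pos hj1, NFA.evalFrom_singleton, step1_sng hn (n - 1),
        if_neg (by omega), evalFrom_empty, if_neg (by omega)]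
    · rw [if_neg hj1]
      by_cases hj2 : j + (n - 2 - i) + 2 ≤ n
      · -- j ≤ i
        rw [if_pos hj2, NFA.evalFrom_singleton, step1_sng hn (j + (n - 2 - i)),
          if_pos (by omega), evalFrom_union, zrun hn 0 (n - 1) (by omega),
          zrun hn (j + (n - 2 - i) + 1) (n - 1) (by omega),
          if_neg (by omega), if_neg (by omega), Set.empty_union]
        by_cases hj3 : j = i
        · rw [if_pos (by omega), if_pos hj3]
        · rw [if_neg (by omega), if_neg (by omega), if_neg hj3]
      · -- j > i
        rw [if_neg hj2, evalFrom_empty, evalFrom_empty, if_neg (by omega)]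

lemma singleton_eq_sng (j : Fin n) : ({j} : Set (Fin n)) = sng n j.val := by
  ext x
  rw [Set.mem_singleton_iff, mem_sng, Fin.ext_iff]

lemma evalFrom_iso (hn : 3 ≤ n) (i : Fin n) (U : Set (Fin n)) :
    (allFinalNFA n).evalFrom U (wIso n i.val) =
      if i ∈ U then sng n (n - 1) else ∅ := by
  rw [evalFrom_eq_biUnion]
  have hj : ∀ j : Fin n, (allFinalNFA n).evalFrom {j} (wIso n i.val) =
      if j = i then sng n (n - 1) else ∅ := by
    intro j
    rw [singleton_eq_sng, iso hn i.val j.val i.isLt j.isLt]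
    by_cases h : j = i
    · rw [if_pos (by rw [h]), if_pos h]
    · rw [if_neg (by simpa [Fin.ext_iff] using h), if_neg h]
  ext x
  simp only [Set.mem_iUnion, hj]
  by_cases hiU : i ∈ U
  · rw [if_pos hiU]
    constructor
    · rintro ⟨j, hjU, hx⟩
      by_cases h : j = i
      · rwa [if_pos h] at hx
      · rw [if_neg h] at hx
        exact absurd hx (Set.notMem_empty x)
    · intro hx
      exact ⟨i, hiU, by rw [if_pos rfl]; exact hx⟩
  · rw [if_neg hiU]
    constructor
    · rintro ⟨j, hjU, hx⟩
      by_cases h : j = i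
      · exact absurd (h ▸ hjU) hiU
      · rwa [if_neg h] at hx
    · exact fun hx => absurd hx (Set.notMem_empty x)

lemma distinguish (hn : 3 ≤ n) (S T : Set (Fin n)) (hST : S ≠ T) :
    ∃ w : List (Fin 2),
      ¬ ((((allFinalNFA n).evalFrom S w) ∩ (allFinalNFA n).accept).Nonempty ↔
         (((allFinalNFA n).evalFrom T w) ∩ (allFinalNFA n).accept).Nonempty) := by
  have hacc : (allFinalNFA n).accept = Set.univ := rfl
  have key : ∀ (S T : Set (Fin n)) (i : Fin n), i ∈ S → i ∉ T →
      ¬ ((((allFinalNFA n).evalFrom S (wIso n i.val)) ∩ (allFinalNFA n).accept).Nonempty ↔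
         (((allFinalNFA n).evalFrom T (wIso n i.val)) ∩ (allFinalNFA n).accept).Nonempty) := by
    intro S T i hiS hiT
    rw [evalFrom_iso hn i S, evalFrom_iso hn i T, if_pos hiS, if_neg hiT, hacc,
      Set.inter_univ, Set.inter_univ]
    intro h
    have := h.mp (sng_nonempty (by omega))
    exact Set.not_nonempty_empty this
  have : ∃ i : Fin n, ¬ (i ∈ S ↔ i ∈ T) := by
    by_contra h
    push_neg at h
    exact hST (Set.ext fun x => (h x))
  obtain ⟨i, hi⟩ := this
  by_cases hiS : i ∈ S
  · have hiT : i ∉ T := fun h => hi ⟨fun _ => h, fun _ => hiS⟩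
    exact ⟨wIso n i.val, key S T i hiS hiT⟩
  · have hiT : i ∈ T := by tauto
    exact ⟨wIso n i.val, fun h => key T S i hiT hiS h.symm⟩


def Reach (n : ℕ) (S : Set (Fin n)) : Prop :=
  ∃ w : List (Fin 2), (allFinalNFA n).evalFrom (allFinalNFA n).start w = S

lemma start_eq : (allFinalNFA n).start = sng n 0 := rfl

lemma reach_start : Reach n (sng n 0) := ⟨[], rfl⟩

lemma reach_step {S : Set (Fin n)} (h : Reach n S) (a : Fin 2) :
    Reach n ((allFinalNFA n).stepSet S a) := by
  obtain ⟨w, hw⟩ := h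
  exact ⟨w ++ [a], by rw [NFA.evalFrom_append, NFA.evalFrom_singleton, hw]⟩

def succF (n : ℕ) : Fin n → Fin n := fun b => if h : b.val + 1 < n then ⟨b.val + 1, h⟩ else b

lemma succF_val {n : ℕ} (b : Fin n) (h : b.val + 1 < n) : (succF n b).val = b.val + 1 := by
  unfold succF; rw [dif_pos h]

lemma succF_val_top {n : ℕ} (b : Fin n) (h : ¬ b.val + 1 < n) : succF n b = b := dif_neg h

def predSet (n : ℕ) (S : Set (Fin n)) : Set (Fin n) := {b | ∃ a ∈ S, b.val + 1 = a.val}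

def predSet' (n : ℕ) (S : Set (Fin n)) : Set (Fin n) :=
  {b | (∃ a ∈ S, a.val + 2 ≤ n ∧ b.val + 1 = a.val) ∨ (b.val = n - 1 ∧ ∃ a ∈ S, a.val = n - 1)}

lemma mem_predSet {n : ℕ} {S : Set (Fin n)} (b : Fin n) :
    b ∈ predSet n S ↔ ∃ a ∈ S, b.val + 1 = a.val := Iff.rfl

lemma mem_predSet' {n : ℕ} {S : Set (Fin n)} (b : Fin n) :
    b ∈ predSet' n S ↔
      (∃ a ∈ S, a.val + 2 ≤ n ∧ b.val + 1 = a.val) ∨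
        (b.val = n - 1 ∧ ∃ a ∈ S, a.val = n - 1) := Iff.rfl

lemma reach_nonempty (hn : 3 ≤ n) (k : ℕ) :
    ∀ S : Set (Fin n), S.Nonempty → n * S.ncard + sInf (Fin.val '' S) = k → Reach n S := by
  induction k using Nat.strong_induction_on with
  | _ k ih =>
  intro S hS hk
  set m := sInf (Fin.val '' S) with hm
  obtain ⟨a₀, ha₀S, ha₀⟩ := Nat.sInf_mem (hS.image Fin.val)
  rw [← hm] at ha₀
  have hmle : ∀ a ∈ S, m ≤ a.val := fun a ha =>
    Nat.sInf_le (Set.mem_image_of_mem Fin.val ha)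
  by_cases hm0 : m = 0
  · -- minimum is 0
    by_cases hS0 : S = sng n 0
    · rw [hS0]; exact reach_start
    · have hex : ∃ a ∈ S, a.val ≠ 0 := by
        by_contra h
        push_neg at h
        apply hS0
        ext x
        rw [mem_sng]
        constructor
        · exact fun hx => h x hx
        · intro hx
          have hx' : x = a₀ := Fin.ext (by omega)
          rw [hx']; exact ha₀S
      obtain ⟨a₁, ha₁S, ha₁⟩ := hex
      have ha₁lt := a₁.isLt
      have hstep : (allFinalNFA n).stepSet (predSet n S) 1 = S := by
        ext x
        rw [NFA.mem_stepSet]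
        constructor
        · rintro ⟨t, ht, hx⟩
          obtain ⟨a, haS, hta⟩ := (mem_predSet t).mp ht
          have halt := a.isLt
          rw [step_one_eq, if_pos (by omega)] at hx
          simp only [Set.mem_setOf_eq] at hx
          rcases hx with h | h
          · have hx' : x = a₀ := Fin.ext (by omega)
            rw [hx']; exact ha₀S
          · have hx' : x = a := Fin.ext (by omega)
            rw [hx']; exact haS
        · intro hxS
          have hxlt := x.isLt
          by_cases hx0 : x.val = 0
          · refine ⟨⟨a₁.val - 1, by omega⟩,
              (mem_predSet _).mpr ⟨a₁, ha₁S, by show a₁.val - 1 + 1 = a₁.val; omega⟩, ?_⟩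
            rw [step_one_eq, if_pos (show a₁.val - 1 + 2 ≤ n by omega)]
            exact Or.inl hx0
          · refine ⟨⟨x.val - 1, by omega⟩,
              (mem_predSet _).mpr ⟨x, hxS, by show x.val - 1 + 1 = x.val; omega⟩, ?_⟩
            rw [step_one_eq, if_pos (show x.val - 1 + 2 ≤ n by omega)]
            exact Or.inr (show x.val = x.val - 1 + 1 by omega)
      have hmaps : ∀ b ∈ predSet n S, succF n b ∈ S \ {a₀} := by
        intro b hb
        obtain ⟨a, haS, hba⟩ := (mem_predSet b).mp hb
        have halt := a.isLt
        have h1 : b.val + 1 < n := by omega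
        have hgb : succF n b = a := Fin.ext (by rw [succF_val b h1]; omega)
        refine ⟨hgb ▸ haS, ?_⟩
        intro hmem
        rw [Set.mem_singleton_iff] at hmem
        have hv : (succF n b).val = a₀.val := by rw [hmem]
        rw [succF_val b h1] at hv
        omega
      have hinj : Set.InjOn (succF n) (predSet n S) := by
        intro b hb b' hb' heq
        obtain ⟨a, haS, hba⟩ := (mem_predSet b).mp hb
        obtain ⟨a', ha'S, hba'⟩ := (mem_predSet b').mp hb'
        have halt := a.isLt
        have ha'lt := a'.isLt
        have hv := congrArg Fin.val heq
        rw [succF_val b (by omega), succF_val b' (by omega)] at hv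
        exact Fin.ext (by omega)
      have hcard : (predSet n S).ncard < S.ncard := by
        have h1 : (predSet n S).ncard ≤ (S \ {a₀}).ncard :=
          Set.ncard_le_ncard_of_injOn (succF n) hmaps hinj ((S.toFinite).diff)
        have h2 : (S \ {a₀}).ncard < S.ncard :=
          Set.ncard_diff_singleton_lt_of_mem ha₀S S.toFinite
        omega
      have hBne : (predSet n S).Nonempty :=
        ⟨⟨a₁.val - 1, by omega⟩,
          (mem_predSet _).mpr ⟨a₁, ha₁S, by show a₁.val - 1 + 1 = a₁.val; omega⟩⟩
      have hμ : n * (predSet n S).ncard + sInf (Fin.val '' predSet n S) < k := by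
        have h3 : sInf (Fin.val '' predSet n S) < n := by
          obtain ⟨b, hb⟩ := hBne
          have h4 := Nat.sInf_le (Set.mem_image_of_mem Fin.val hb)
          have h5 := b.isLt
          omega
        have h4 : n * (predSet n S).ncard + n ≤ n * S.ncard := by
          calc n * (predSet n S).ncard + n = n * ((predSet n S).ncard + 1) := by ring
            _ ≤ n * S.ncard := Nat.mul_le_mul_left n hcard
        omega
      have := reach_step (ih _ hμ (predSet n S) hBne rfl) 1
      rwa [hstep] at this
  · -- minimum is positive
    by_cases hex : ∃ a ∈ S, a.val + 2 ≤ n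
    · obtain ⟨a₂, ha₂S, ha₂⟩ := hex
      have ha₂m := hmle a₂ ha₂S
      have ha₀lt := a₀.isLt
      have hstep : (allFinalNFA n).stepSet (predSet' n S) 0 = S := by
        ext x
        rw [NFA.mem_stepSet]
        constructor
        · rintro ⟨t, ht, hx⟩
          rw [step_zero_eq] at hx
          rcases (mem_predSet' t).mp ht with ⟨a, haS, ha2, hta⟩ | ⟨ht1, a, haS, ha1⟩
          · rw [if_pos (by omega)] at hx
            simp only [Set.mem_setOf_eq] at hx
            have hx' : x = a := Fin.ext (by omega)
            rw [hx']; exact haS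
          · rw [if_neg (by omega), if_pos ht1] at hx
            rw [Set.mem_singleton_iff] at hx
            have hxv : x.val = t.val := by rw [hx]
            have hx' : x = a := Fin.ext (by omega)
            rw [hx']; exact haS
        · intro hxS
          have hxlt := x.isLt
          have hxm := hmle x hxS
          by_cases hx2 : x.val + 2 ≤ n
          · refine ⟨⟨x.val - 1, by omega⟩,
              (mem_predSet' _).mpr (Or.inl ⟨x, hxS, hx2, by show x.val - 1 + 1 = x.val; omega⟩), ?_⟩
            rw [step_zero_eq, if_pos (show x.val - 1 + 3 ≤ n by omega)]
            exact (show x.val = x.val - 1 + 1 by omega)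
          · have hx1 : x.val = n - 1 := by omega
            refine ⟨x, (mem_predSet' _).mpr (Or.inr ⟨hx1, x, hxS, hx1⟩), ?_⟩
            rw [step_zero_eq, if_neg (by omega), if_pos hx1]
            exact rfl
      have hbound : ∀ b ∈ predSet' n S, b.val + 3 ≤ n ∨ b.val = n - 1 := by
        intro b hb
        rcases (mem_predSet' b).mp hb with ⟨a, haS, ha2, hba⟩ | ⟨hb1, _⟩
        · left; omega
        · right; exact hb1
      have hmaps : ∀ b ∈ predSet' n S, succF n b ∈ S := by
        intro b hb
        rcases (mem_predSet' b).mp hb with ⟨a, haS, ha2, hba⟩ | ⟨hb1, a, haS, ha1⟩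
        · have h1 : b.val + 1 < n := by omega
          have hgb : succF n b = a := Fin.ext (by rw [succF_val b h1]; omega)
          rw [hgb]; exact haS
        · have hgb : succF n b = b := succF_val_top b (by omega)
          have hba : b = a := Fin.ext (by omega)
          rw [hgb, hba]; exact haS
      have hinj : Set.InjOn (succF n) (predSet' n S) := by
        intro b hb b' hb' heq
        have h1 := hbound b hb
        have h2 := hbound b' hb'
        have hv := congrArg Fin.val heq
        rcases h1 with h1 | h1 <;> rcases h2 with h2 | h2
        · rw [succF_val b (by omega), succF_val b' (by omega)] at hv
          exact Fin.ext (by omega)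
        · rw [succF_val b (by omega), succF_val_top b' (by omega)] at hv
          exact absurd hv (by omega)
        · rw [succF_val_top b (by omega), succF_val b' (by omega)] at hv
          exact absurd hv (by omega)
        · rw [succF_val_top b (by omega), succF_val_top b' (by omega)] at hv
          exact Fin.ext hv
      have hcard : (predSet' n S).ncard ≤ S.ncard :=
        Set.ncard_le_ncard_of_injOn (succF n) hmaps hinj S.toFinite
      have hb₁mem : (⟨a₀.val - 1, by omega⟩ : Fin n) ∈ predSet' n S :=
        (mem_predSet' _).mpr (Or.inl ⟨a₀, ha₀S, by omega,
          by show a₀.val - 1 + 1 = a₀.val; omega⟩)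
      have hne' : (predSet' n S).Nonempty := ⟨_, hb₁mem⟩
      have hsinf : sInf (Fin.val '' predSet' n S) < m := by
        have h4 := Nat.sInf_le (Set.mem_image_of_mem Fin.val hb₁mem)
        have h5 : (⟨a₀.val - 1, by omega⟩ : Fin n).val = a₀.val - 1 := rfl
        omega
      have hμ : n * (predSet' n S).ncard + sInf (Fin.val '' predSet' n S) < k := by
        have h4 : n * (predSet' n S).ncard ≤ n * S.ncard := Nat.mul_le_mul_left n hcard
        omega
      have := reach_step (ih _ hμ (predSet' n S) hne' rfl) 0
      rwa [hstep] at this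
    · push_neg at hex
      have hSeq : S = sng n (n - 1) := by
        ext x
        rw [mem_sng]
        constructor
        · intro hx
          have h1 := hex x hx
          have h2 := x.isLt
          omega
        · intro hx
          have h1 := hex a₀ ha₀S
          have h2 := a₀.isLt
          have hx' : x = a₀ := Fin.ext (by omega)
          rw [hx']; exact ha₀S
      rw [hSeq]
      exact ⟨wIso n 0, by
        rw [start_eq, iso hn 0 0 (by omega) (by omega), if_pos rfl]⟩

lemma reach_all (hn : 3 ≤ n) (S : Set (Fin n)) : Reach n S := by
  rcases Set.eq_empty_or_nonempty S with rfl | hS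
  · exact ⟨List.replicate (n - 1) 0, by
      rw [start_eq, zrun hn 0 (n - 1) (by omega), if_neg (by omega), if_neg (by omega)]⟩
  · exact reach_nonempty hn _ S hS rfl

end AllFinal

theorem allFinalNFA_blowup (n : ℕ) (hn : 3 ≤ n) :
    (∀ S : Set (Fin n), ∃ w : List (Fin 2),
        (allFinalNFA n).evalFrom (allFinalNFA n).start w = S) ∧
    (∀ S T : Set (Fin n), S ≠ T → ∃ w : List (Fin 2),
        ¬ ((((allFinalNFA n).evalFrom S w) ∩ (allFinalNFA n).accept).Nonempty ↔
           (((allFinalNFA n).evalFrom T w) ∩ (allFinalNFA n).accept).Nonempty)) ∧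
    (∃ (τ : Type) (_ : Fintype τ) (D : DFA (Fin 2) τ),
        D.accepts = (allFinalNFA n).accepts ∧ Fintype.card τ = 2 ^ n) ∧
    (∀ (τ : Type) (_ : Fintype τ) (D : DFA (Fin 2) τ),
        D.accepts = (allFinalNFA n).accepts → 2 ^ n ≤ Fintype.card τ) := by
  have part1 : ∀ S : Set (Fin n), ∃ w : List (Fin 2),
      (allFinalNFA n).evalFrom (allFinalNFA n).start w = S := AllFinal.reach_all hn
  have part2 := AllFinal.distinguish hn
  refine ⟨part1, part2, ?_, ?_⟩
  · refine ⟨Set (Fin n), inferInstance, (allFinalNFA n).toDFA, (allFinalNFA n).toDFA_correct, ?_⟩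
    rw [Fintype.card_set, Fintype.card_fin]
  · intro τ inst D hD
    classical
    choose word hword using part1
    have hinj : Function.Injective (fun S : Set (Fin n) => D.evalFrom D.start (word S)) := by
      intro S T h
      simp only at h
      by_contra hne
      obtain ⟨w, hw⟩ := part2 S T hne
      apply hw
      have acc : ∀ U : Set (Fin n),
          (((allFinalNFA n).evalFrom U w) ∩ (allFinalNFA n).accept).Nonempty ↔
            (word U ++ w) ∈ (allFinalNFA n).accepts := by
        intro U
        rw [NFA.mem_accepts]
        constructor
        · rintro ⟨q, hq1, -⟩
          exact ⟨q, Set.mem_univ q, by rw [AllFinal.evalFrom_app, hword U]; exact hq1⟩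
        · rintro ⟨q, -, hq⟩
          rw [AllFinal.evalFrom_app, hword U] at hq
          exact ⟨q, hq, Set.mem_univ q⟩
      rw [acc S, acc T, ← hD, DFA.mem_accepts, DFA.mem_accepts]
      simp only [DFA.eval]
      rw [DFA.evalFrom_of_append, DFA.evalFrom_of_append, h]
    calc 2 ^ n = Fintype.card (Set (Fin n)) := by rw [Fintype.card_set, Fintype.card_fin]
      _ ≤ Fintype.card τ := Fintype.card_le_of_injective _ hinj
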